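/- Let B and R = {p_1, …, p_n} be two finite sets of points in the Euclidean plane ℝ², with the points p_1, …, p_n pairwise distinct, and for each i let D_i be the closed Euclidean disk of radius ρ_i > 0 centered at p_i. If for every i the number of points of B in D_i is at least the number of points of R in D_i (i.e., |D_i ∩ B| ≥ |D_i ∩ R| for all i), then 5·|B| ≥ n, i.e., the total number of blue points is at least one fifth of the total number of red points. -/

import Mathlib

open Real in

lemma six_angles (θ : Fin 6 → ℝ) (h : ∀ i j, i ≠ j → Real.cos (θ i - θ j) < 1/2) : False := by
  have hπ : (0:ℝ) < π := Real.pi_pos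
  set ψ : Fin 6 → ℝ := fun i => (θ i - θ 0) - 2*π * ⌊(θ i - θ 0)/(2*π)⌋ with hψdef
  have hψ_cos : ∀ i j : Fin 6, Real.cos (ψ i - ψ j) = Real.cos (θ i - θ j) := by
    intro i j
    have : ψ i - ψ j = (θ i - θ j) - (⌊(θ i - θ 0)/(2*π)⌋ - ⌊(θ j - θ 0)/(2*π)⌋ : ℤ) * (2*π) := by
      simp only [hψdef]; push_cast; ring
    rw [this, Real.cos_sub_int_mul_two_pi]
  have hψ_mem : ∀ i, 0 ≤ ψ i ∧ ψ i < 2*π := by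
    intro i
    have h2π : (0:ℝ) < 2*π := by linarith
    have hfr : ψ i = 2*π * Int.fract ((θ i - θ 0)/(2*π)) := by
      have hx : 2*π*((θ i - θ 0)/(2*π)) = θ i - θ 0 := by field_simp
      rw [Int.fract, mul_sub, hx]
    constructor
    · rw [hfr]
      exact mul_nonneg (by linarith) (Int.fract_nonneg _)
    · rw [hfr]
      have := Int.fract_lt_one ((θ i - θ 0)/(2*π))
      nlinarith
  have hψint : ∀ i : Fin 6, i ≠ 0 → π/3 < ψ i ∧ ψ i < 5*π/3 := by
    intro i hi
    have hci : Real.cos (ψ i) < 1/2 := by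
      have := h i 0 hi
      have e : ψ i - ψ 0 = ψ i := by
        have : ψ 0 = 0 := by simp [hψdef]
        rw [this]; ring
      rw [← e, hψ_cos]; exact this
    have h0 := (hψ_mem i).1
    have h2 := (hψ_mem i).2
    constructor
    · by_contra hle
      push_neg at hle
      have : Real.cos (π/3) ≤ Real.cos (ψ i) :=
        Real.cos_le_cos_of_nonneg_of_le_pi h0 (by linarith) hle
      rw [Real.cos_pi_div_three] at this; linarith
    · by_contra hge
      push_neg at hge
      have e : Real.cos (ψ i) = Real.cos (2*π - ψ i) := by
        rw [Real.cos_two_pi_sub]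
      have : Real.cos (π/3) ≤ Real.cos (2*π - ψ i) :=
        Real.cos_le_cos_of_nonneg_of_le_pi (by linarith) (by linarith) (by linarith)
      rw [Real.cos_pi_div_three] at this; linarith
  -- pigeonhole on the 5 values ψ (k.succ)
  have hmap : ∀ k : Fin 5, ⌊(ψ k.succ - π/3)/(π/3)⌋ ∈ Finset.Icc (0:ℤ) 3 := by
    intro k
    have hk := hψint k.succ (Fin.succ_ne_zero k)
    have hpos : (0:ℝ) < π/3 := by linarith
    have h43 : ψ k.succ - π/3 < 4 * (π/3) := by linarith [hk.2]
    rw [Finset.mem_Icc]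
    constructor
    · rw [Int.le_floor]
      push_cast
      have : 0 ≤ (ψ k.succ - π/3)/(π/3) := le_of_lt (div_pos (by linarith [hk.1]) hpos)
      linarith
    · have : ⌊(ψ k.succ - π/3)/(π/3)⌋ < 4 := by
        rw [Int.floor_lt]
        push_cast
        rw [div_lt_iff₀ hpos]
        linarith
      omega
  have hcard : (Finset.Icc (0:ℤ) 3).card < (Finset.univ : Finset (Fin 5)).card := by
    simp
  obtain ⟨k, -, l, -, hkl, heq⟩ :=
    Finset.exists_ne_map_eq_of_card_lt_of_maps_to hcard (fun k _ => hmap k)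
  have hpos : (0:ℝ) < π/3 := by linarith
  have habs : |(ψ k.succ - π/3)/(π/3) - (ψ l.succ - π/3)/(π/3)| < 1 :=
    Int.abs_sub_lt_one_of_floor_eq_floor heq
  have hd : |ψ k.succ - ψ l.succ| < π/3 := by
    have : (ψ k.succ - π/3)/(π/3) - (ψ l.succ - π/3)/(π/3) = (ψ k.succ - ψ l.succ)/(π/3) := by
      field_simp; ring
    rw [this, abs_div, abs_of_pos hpos, div_lt_one hpos] at habs
    exact habs
  have hcos : 1/2 < Real.cos (ψ k.succ - ψ l.succ) := by
    rcases eq_or_lt_of_le (abs_nonneg (ψ k.succ - ψ l.succ)) with he | hlt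
    · rw [← Real.cos_abs, ← he]; norm_num [Real.cos_zero]
    · have := Real.cos_lt_cos_of_nonneg_of_le_pi (abs_nonneg _) (by linarith) hd
      rw [Real.cos_pi_div_three, Real.cos_abs] at this
      linarith
  rw [hψ_cos] at hcos
  have hne : (k.succ : Fin 6) ≠ l.succ := fun e => hkl (Fin.succ_injective 5 e)
  exact absurd (h k.succ l.succ hne) (by linarith)

open Complex in
lemma six_points (b : ℂ) (q : Fin 6 → ℂ)
    (h : ∀ i j, i ≠ j → max (dist b (q i)) (dist b (q j)) < dist (q i) (q j)) : False := by
  have hne : ∀ i, q i - b ≠ 0 := by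
    intro i he
    obtain ⟨j, hj⟩ := exists_ne i
    rw [sub_eq_zero] at he
    have hlt := h i j hj.symm
    rw [he, dist_self] at hlt
    have h1 : max (0:ℝ) (dist b (q j)) = dist b (q j) := max_eq_right dist_nonneg
    rw [h1] at hlt
    exact lt_irrefl _ hlt
  apply six_angles (fun i => (q i - b).arg)
  intro i j hij
  show Real.cos ((q i - b).arg - (q j - b).arg) < 1/2
  set u := q i - b with hu'
  set v := q j - b with hv'
  have hu : (0:ℝ) < ‖u‖ := norm_pos_iff.mpr (hne i)
  have hv : (0:ℝ) < ‖v‖ := norm_pos_iff.mpr (hne j)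
  have hre : (u * (starRingEnd ℂ) v).re
      = ‖u‖ * ‖v‖ * Real.cos (u.arg - v.arg) := by
    conv_lhs => rw [← norm_mul_exp_arg_mul_I u, ← norm_mul_exp_arg_mul_I v]
    rw [map_mul, conj_ofReal, ← exp_conj, map_mul, conj_ofReal, conj_I]
    have e2 : cexp (↑u.arg * I) * cexp (↑v.arg * -I) = cexp (↑(u.arg - v.arg) * I) := by
      rw [← Complex.exp_add]; congr 1; push_cast; ring
    have e3 : (↑(‖u‖) * cexp (↑u.arg * I) * (↑(‖v‖) * cexp (↑v.arg * -I)))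
        = (↑(‖u‖ * ‖v‖) : ℂ) * cexp (↑(u.arg - v.arg) * I) := by
      rw [← e2]; push_cast; ring
    rw [e3, Complex.re_ofReal_mul, Complex.exp_ofReal_mul_I_re]
  have hdij : dist (q i) (q j) = ‖u - v‖ := by
    rw [Complex.dist_eq]
    congr 1
    rw [hu', hv']; ring
  have hbi : dist b (q i) = ‖u‖ := by
    rw [dist_comm, Complex.dist_eq, ← hu']
  have hbj : dist b (q j) = ‖v‖ := by
    rw [dist_comm, Complex.dist_eq, ← hv']
  have hlt := h i j hij
  rw [hdij, hbi, hbj] at hlt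
  have hsq : (max (‖u‖) (‖v‖))^2 < (‖u-v‖)^2 :=
    pow_lt_pow_left₀ hlt (le_trans hu.le (le_max_left _ _)) (by norm_num)
  have habssq : (‖u-v‖)^2
      = (‖u‖)^2 + (‖v‖)^2 - 2*(u * (starRingEnd ℂ) v).re := by
    rw [Complex.sq_norm, Complex.sq_norm, Complex.sq_norm, Complex.normSq_sub]
  rw [habssq, hre] at hsq
  rcases le_total (‖u‖) (‖v‖) with hc | hc
  · rw [max_eq_right hc] at hsq
    nlinarith [mul_pos hu hv]
  · rw [max_eq_left hc] at hsq
    nlinarith [mul_pos hu hv]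

lemma greedy_net {n : ℕ} (p : Fin n → EuclideanSpace ℝ (Fin 2)) (ρ : Fin n → ℝ)
    (hρ : ∀ i, 0 ≤ ρ i) :
    ∀ (m : ℕ) (S : Finset (Fin n)), S.card ≤ m → ∃ T : Finset (Fin n), T ⊆ S ∧
      (∀ i ∈ S, ∃ j ∈ T, dist (p i) (p j) ≤ ρ j) ∧
      (∀ j ∈ T, ∀ j' ∈ T, j ≠ j' → max (ρ j) (ρ j') < dist (p j) (p j')) := by
  intro m
  induction m with
  | zero =>
    intro S hS
    refine ⟨∅, Finset.empty_subset _, ?_, by simp⟩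
    intro i hi
    exact absurd (Finset.card_eq_zero.mp (Nat.le_zero.mp hS) ▸ hi) (Finset.notMem_empty i)
  | succ m ih =>
    intro S hS
    rcases S.eq_empty_or_nonempty with rfl | hSne
    · exact ⟨∅, Finset.empty_subset _, by simp, by simp⟩
    obtain ⟨j, hjS, hjmax⟩ := S.exists_max_image ρ hSne
    set S' := S.filter (fun i => ρ j < dist (p i) (p j)) with hS'def
    have hjS' : j ∉ S' := by
      simp [hS'def, dist_self, hρ j]
    have hS'card : S'.card ≤ m := by
      have h1 : S' ⊆ S := Finset.filter_subset _ _
      have h2 : S'.card < S.card := Finset.card_lt_card ⟨h1, fun hsub => hjS' (hsub hjS)⟩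
      omega
    obtain ⟨T', hT'sub, hT'cov, hT'sep⟩ := ih S' hS'card
    have hjT' : j ∉ T' := fun hc => hjS' (hT'sub hc)
    refine ⟨insert j T', ?_, ?_, ?_⟩
    · intro x hx
      rcases Finset.mem_insert.mp hx with rfl | hx
      · exact hjS
      · exact Finset.filter_subset _ _ (hT'sub hx)
    · intro i hi
      by_cases hd : dist (p i) (p j) ≤ ρ j
      · exact ⟨j, Finset.mem_insert_self _ _, hd⟩
      · have hi' : i ∈ S' := Finset.mem_filter.mpr ⟨hi, not_le.mp hd⟩
        obtain ⟨j', hj', hdj'⟩ := hT'cov i hi'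
        exact ⟨j', Finset.mem_insert_of_mem hj', hdj'⟩
    · intro a ha b hb hab
      have key : ∀ c ∈ T', max (ρ j) (ρ c) < dist (p j) (p c) := by
        intro c hc
        have hcS' : c ∈ S' := hT'sub hc
        have h1 : ρ j < dist (p c) (p j) := (Finset.mem_filter.mp hcS').2
        have h2 : ρ c ≤ ρ j := hjmax c (Finset.filter_subset _ _ hcS')
        rw [dist_comm] at h1
        rw [max_eq_left h2]
        exact h1
      rcases Finset.mem_insert.mp ha with hea | ha
      · rcases Finset.mem_insert.mp hb with heb | hb
        · exact absurd (hea.trans heb.symm) hab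
        · rw [hea]; exact key b hb
      · rcases Finset.mem_insert.mp hb with heb | hb
        · rw [heb, max_comm, dist_comm]; exact key a ha
        · exact hT'sep a ha b hb hab

lemma six_points_plane (b : EuclideanSpace ℝ (Fin 2)) (q : Fin 6 → EuclideanSpace ℝ (Fin 2))
    (h : ∀ i j, i ≠ j → max (dist b (q i)) (dist b (q j)) < dist (q i) (q j)) : False := by
  let e := Complex.orthonormalBasisOneI.repr.symm
  apply six_points (e b) (fun i => e (q i))
  intro i j hij
  simpa only [LinearIsometryEquiv.dist_map] using h i j hij

/-- Local-to-global theorem in the Euclidean plane: if in each disk `D i`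
(centered at the red point `p i`, radius `ρ i > 0`) there are at least as many
blue points as red points, then `5 * |B| ≥ n`. -/
theorem stmt_0 {n : ℕ} (p : Fin n → EuclideanSpace ℝ (Fin 2))
    (hp : Function.Injective p) (ρ : Fin n → ℝ) (hρ : ∀ i, 0 < ρ i)
    (B : Set (EuclideanSpace ℝ (Fin 2))) (hB : B.Finite)
    (h : ∀ i, (Set.range p ∩ Metric.closedBall (p i) (ρ i)).ncard ≤
              (B ∩ Metric.closedBall (p i) (ρ i)).ncard) :
    n ≤ 5 * B.ncard := by
  classical
  obtain ⟨T, hTsub, hTcov, hTsep⟩ :=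
    greedy_net p ρ (fun i => (hρ i).le) (Finset.univ : Finset (Fin n)).card Finset.univ le_rfl
  have hchoice : ∀ i : Fin n, ∃ j, j ∈ T ∧ dist (p i) (p j) ≤ ρ j := by
    intro i
    obtain ⟨j, hj, hd⟩ := hTcov i (Finset.mem_univ i)
    exact ⟨j, hj, hd⟩
  choose f hfT hfd using hchoice
  set Bf := hB.toFinset with hBfdef
  -- fiber counting
  have hcount : ∀ j ∈ T, (Finset.univ.filter (fun i => f i = j)).card
      ≤ (Bf.filter (fun b => dist b (p j) ≤ ρ j)).card := by
    intro j _
    have hfin1 : (Set.range p ∩ Metric.closedBall (p j) (ρ j)).Finite :=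
      (Set.finite_range p).inter_of_left _
    have step1 : (Finset.univ.filter (fun i => f i = j)).card ≤ hfin1.toFinset.card := by
      apply Finset.card_le_card_of_injOn (fun i => p i)
      · intro i hi
        rw [Finset.mem_coe, Finset.mem_filter] at hi
        rw [Finset.mem_coe, Set.Finite.mem_toFinset]
        refine ⟨Set.mem_range_self i, ?_⟩
        rw [Metric.mem_closedBall, ← hi.2]
        exact hfd i
      · exact fun x _ y _ hxy => hp hxy
    have step2 : hfin1.toFinset.card ≤ (B ∩ Metric.closedBall (p j) (ρ j)).ncard := by
      rw [← Set.ncard_eq_toFinset_card _ hfin1]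
      exact h j
    have step3 : (B ∩ Metric.closedBall (p j) (ρ j)).ncard
        = (Bf.filter (fun b => dist b (p j) ≤ ρ j)).card := by
      have hset : B ∩ Metric.closedBall (p j) (ρ j)
          = ↑(Bf.filter (fun b => dist b (p j) ≤ ρ j)) := by
        ext x
        simp [hBfdef, Set.Finite.mem_toFinset, Metric.mem_closedBall]
      rw [hset, Set.ncard_coe_finset]
    omega
  -- each blue point is in at most 5 chosen disks
  have h5 : ∀ b ∈ Bf, (T.filter (fun j => dist b (p j) ≤ ρ j)).card ≤ 5 := by
    intro b _
    by_contra hgt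
    push_neg at hgt
    obtain ⟨s, hs_sub, hs6⟩ := Finset.exists_subset_card_eq (show 6 ≤ _ from hgt)
    let e := s.orderIsoOfFin hs6
    apply six_points_plane b (fun k => p (e k))
    intro k l hkl
    have hek := Finset.mem_filter.mp (hs_sub (e k).2)
    have hel := Finset.mem_filter.mp (hs_sub (e l).2)
    have hne : ((e k : s) : Fin n) ≠ ((e l : s) : Fin n) := by
      intro hc
      exact hkl (e.injective (Subtype.ext hc))
    have hsep := hTsep _ hek.1 _ hel.1 hne
    calc max (dist b (p (e k))) (dist b (p (e l)))
        ≤ max (ρ (e k)) (ρ (e l)) := max_le_max hek.2 hel.2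
      _ < dist (p (e k)) (p (e l)) := hsep
  -- sum swap
  have hswap : ∑ j ∈ T, (Bf.filter (fun b => dist b (p j) ≤ ρ j)).card
      = ∑ b ∈ Bf, (T.filter (fun j => dist b (p j) ≤ ρ j)).card := by
    simp only [Finset.card_filter]
    rw [Finset.sum_comm]
  have hfib : (Finset.univ : Finset (Fin n)).card
      = ∑ j ∈ T, (Finset.univ.filter (fun i => f i = j)).card :=
    Finset.card_eq_sum_card_fiberwise (fun i _ => hfT i)
  have hn : (Finset.univ : Finset (Fin n)).card = n := by simp
  have hBcard : Bf.card = B.ncard := (Set.ncard_eq_toFinset_card B hB).symm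
  calc n = ∑ j ∈ T, (Finset.univ.filter (fun i => f i = j)).card := by rw [← hfib]; exact hn.symm
    _ ≤ ∑ j ∈ T, (Bf.filter (fun b => dist b (p j) ≤ ρ j)).card :=
        Finset.sum_le_sum hcount
    _ = ∑ b ∈ Bf, (T.filter (fun j => dist b (p j) ≤ ρ j)).card := hswap
    _ ≤ ∑ _b ∈ Bf, 5 := Finset.sum_le_sum h5
    _ = 5 * B.ncard := by rw [Finset.sum_const, smul_eq_mul, mul_comm, hBcard]
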